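/- arXiv:1110.4554 — 2 statements merged into one kernel-verified Lean document; each statement's English description precedes it below -/
import Mathlib

section
/- Let Φ = (Γ, φ) be a complex unit gain graph on a connected graph Γ. Then the largest Laplacian eigenvalue satisfies λ_1(L(Φ)) ≤ λ_1(Q(Γ)), where Q(Γ) = D(Γ) + A(Γ) is the signless Laplacian of the underlying unsigned graph. -/
open Matrix Complex

theorem rayleigh_le_aux {n : ℕ} [NeZero n] (Q : Matrix (Fin n) (Fin n) ℂ) (hQ : Q.IsHermitian)
    (x : Fin n → ℂ) :
    Complex.re (star x ⬝ᵥ Q *ᵥ x) ≤ (⨆ i, hQ.eigenvalues i) * ∑ i, Complex.normSq (x i) := by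
  set U : Matrix (Fin n) (Fin n) ℂ := (hQ.eigenvectorUnitary : Matrix (Fin n) (Fin n) ℂ) with hU
  set y : Fin n → ℂ := star U *ᵥ x with hy
  have hsy : star y = star x ᵥ* U := by
    rw [hy, star_mulVec]; simp [Matrix.star_eq_conjTranspose]
  have key : star x ⬝ᵥ Q *ᵥ x = ∑ i, (hQ.eigenvalues i : ℂ) * (starRingEnd ℂ (y i) * y i) := by
    conv_lhs => rw [hQ.spectral_theorem, Unitary.conjStarAlgAut_apply]
    rw [← mulVec_mulVec, ← mulVec_mulVec, dotProduct_mulVec, ← hsy, ← hU, ← hy]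
    simp only [dotProduct, mulVec_diagonal, Function.comp, Pi.star_apply, RCLike.star_def]
    exact Finset.sum_congr rfl fun i _ => mul_left_comm _ _ _
  have hnorm : ∑ i, Complex.normSq (y i) = ∑ i, Complex.normSq (x i) := by
    have h1 : star y ⬝ᵥ y = star x ⬝ᵥ x := by
      rw [hsy, hy, ← dotProduct_mulVec, mulVec_mulVec,
        (Matrix.mem_unitaryGroup_iff).mp hQ.eigenvectorUnitary.2, one_mulVec]
    have h2 : ∀ z : Fin n → ℂ, star z ⬝ᵥ z = ((∑ i, Complex.normSq (z i) : ℝ) : ℂ) := by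
      intro z
      simp [dotProduct, Complex.normSq_eq_conj_mul_self]
    rw [h2 y, h2 x] at h1
    exact_mod_cast h1
  have hre : Complex.re (star x ⬝ᵥ Q *ᵥ x) = ∑ i, hQ.eigenvalues i * Complex.normSq (y i) := by
    rw [key, Complex.re_sum]
    refine Finset.sum_congr rfl fun i _ => ?_
    rw [← Complex.normSq_eq_conj_mul_self, ← Complex.ofReal_mul, Complex.ofReal_re]
  rw [hre, ← hnorm, Finset.mul_sum]
  apply Finset.sum_le_sum
  intro i _
  have : hQ.eigenvalues i ≤ ⨆ j, hQ.eigenvalues j :=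
    le_ciSup (Set.Finite.bddAbove (Set.finite_range _)) i
  nlinarith [Complex.normSq_nonneg (y i)]

/-- For a connected complex unit gain graph `Φ = (Γ, φ)`, the largest Laplacian
eigenvalue is at most the largest eigenvalue of the signless Laplacian
`Q(Γ) = D(Γ) + A(Γ)` of the underlying graph. -/
theorem stmt_11 {n : ℕ} (hn : 0 < n)
    (G : SimpleGraph (Fin n)) [DecidableRel G.Adj] (hconn : G.Connected)
    (φ : Fin n → Fin n → ℂ)
    (hunit : ∀ i j, G.Adj i j → ‖φ i j‖ = 1)
    (hinv : ∀ i j, G.Adj i j → φ j i = (φ i j)⁻¹)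
    (L Q : Matrix (Fin n) (Fin n) ℂ)
    (hLdef : L = Matrix.diagonal (fun i => (G.degree i : ℂ)) -
      Matrix.of (fun i j => if G.Adj i j then φ i j else 0))
    (hQdef : Q = Matrix.diagonal (fun i => (G.degree i : ℂ)) + G.adjMatrix ℂ)
    (hL : L.IsHermitian) (hQ : Q.IsHermitian) :
    (⨆ i, hL.eigenvalues i) ≤ ⨆ i, hQ.eigenvalues i := by
  haveI : NeZero n := ⟨hn.ne'⟩
  -- expansion of the quadratic form
  have expand : ∀ (M : Matrix (Fin n) (Fin n) ℂ) (z : Fin n → ℂ),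
      Complex.re (star z ⬝ᵥ M *ᵥ z) =
        ∑ a, ∑ b, Complex.re (starRingEnd ℂ (z a) * (M a b * z b)) := by
    intro M z
    simp [dotProduct, mulVec, Finset.mul_sum, Complex.re_sum]
  have diagre : ∀ (r : ℝ) (z : ℂ),
      Complex.re (starRingEnd ℂ z * ((r : ℂ) * z)) = r * Complex.normSq z := by
    intro r z
    rw [mul_left_comm, ← Complex.normSq_eq_conj_mul_self, ← Complex.ofReal_mul,
      Complex.ofReal_re]
  apply ciSup_le
  intro i
  set v : Fin n → ℂ := ⇑(hL.eigenvectorBasis i) with hv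
  set w : Fin n → ℂ := fun j => ((‖v j‖ : ℝ) : ℂ) with hw
  have hwns : ∀ j, Complex.normSq (w j) = Complex.normSq (v j) := by
    intro j
    rw [hw]
    simp [Complex.normSq_ofReal, Complex.normSq_eq_norm_sq, sq]
  have hv1 : ∑ j, Complex.normSq (v j) = 1 := by
    have h1 : ‖hL.eigenvectorBasis i‖ = 1 := hL.eigenvectorBasis.orthonormal.1 i
    rw [EuclideanSpace.norm_eq] at h1
    have h2 : ∑ j, ‖hL.eigenvectorBasis i j‖ ^ 2 = 1 := by
      rw [Real.sqrt_eq_one] at h1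
      exact h1
    rw [← h2]
    refine Finset.sum_congr rfl fun j _ => ?_
    rw [hv, ← Complex.sq_norm]
  -- termwise comparison
  have termwise : ∀ a b : Fin n,
      Complex.re (starRingEnd ℂ (v a) * (L a b * v b)) ≤
        Complex.re (starRingEnd ℂ (w a) * (Q a b * w b)) := by
    intro a b
    rw [hLdef, hQdef]
    by_cases hab : a = b
    · subst hab
      have hself : ¬ G.Adj a a := G.irrefl
      simp only [Matrix.sub_apply, Matrix.add_apply, diagonal_apply_eq, of_apply, SimpleGraph.adjMatrix_apply,
        if_neg hself, sub_zero, add_zero]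
      have hcast : ((G.degree a : ℂ)) = (((G.degree a : ℝ)) : ℂ) := by push_cast; ring
      rw [hcast, diagre, diagre, hwns]
    · by_cases hadj : G.Adj a b
      · simp only [Matrix.sub_apply, Matrix.add_apply, diagonal_apply_ne _ hab, of_apply,
          SimpleGraph.adjMatrix_apply, if_pos hadj, zero_sub, zero_add, one_mul]
        have hrhs : starRingEnd ℂ (w a) * w b =
            (((‖v a‖ * ‖v b‖ : ℝ)) : ℂ) := by
          rw [hw]
          simp [Complex.conj_ofReal, ← Complex.ofReal_mul]
        rw [hrhs, Complex.ofReal_re]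
        have habs : ‖starRingEnd ℂ (v a) * (φ a b * v b)‖ =
            ‖v a‖ * ‖v b‖ := by
          rw [norm_mul, norm_mul, Complex.norm_conj, hunit a b hadj, one_mul]
        calc Complex.re (starRingEnd ℂ (v a) * (-φ a b * v b))
            = - Complex.re (starRingEnd ℂ (v a) * (φ a b * v b)) := by
              rw [← Complex.neg_re]; ring_nf
          _ ≤ ‖starRingEnd ℂ (v a) * (φ a b * v b)‖ := by
              have := Complex.abs_re_le_norm (starRingEnd ℂ (v a) * (φ a b * v b))
              linarith [neg_abs_le (Complex.re (starRingEnd ℂ (v a) * (φ a b * v b)))]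
          _ = ‖v a‖ * ‖v b‖ := habs
      · simp [Matrix.sub_apply, Matrix.add_apply, diagonal_apply_ne _ hab, of_apply,
          SimpleGraph.adjMatrix_apply, if_neg hadj]
  -- assemble
  have step1 : hL.eigenvalues i = Complex.re (star v ⬝ᵥ L *ᵥ v) := hL.eigenvalues_eq i
  have step2 : Complex.re (star v ⬝ᵥ L *ᵥ v) ≤ Complex.re (star w ⬝ᵥ Q *ᵥ w) := by
    rw [expand, expand]
    exact Finset.sum_le_sum fun a _ => Finset.sum_le_sum fun b _ => termwise a b
  have step3 : Complex.re (star w ⬝ᵥ Q *ᵥ w) ≤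
      (⨆ j, hQ.eigenvalues j) * ∑ j, Complex.normSq (w j) := rayleigh_le_aux Q hQ w
  have step4 : ∑ j, Complex.normSq (w j) = 1 := by
    rw [← hv1]
    exact Finset.sum_congr rfl fun j _ => hwns j
  rw [step4, mul_one] at step3
  linarith [step1, step2, step3]
end

section
/- Let Γ be a connected simple graph and Φ = (Γ, φ) a complex unit gain graph. Then λ_1(L(Φ)) = λ_1(Q(Γ)) if and only if Φ is switching equivalent to (Γ, −1), i.e., if and only if the gain graph (Γ, −φ) is balanced. -/
open Matrix Complex

namespace Stmt12Aux
variable {n : ℕ}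

noncomputable def nsq (x : Fin n → ℂ) : ℝ := ∑ i, Complex.normSq (x i)

lemma nsq_nonneg (x : Fin n → ℂ) : 0 ≤ nsq x :=
  Finset.sum_nonneg fun i _ => Complex.normSq_nonneg _

lemma dot_self (x : Fin n → ℂ) : star x ⬝ᵥ x = (nsq x : ℂ) := by
  simp [dotProduct, nsq, ← Complex.normSq_eq_conj_mul_self]

lemma conj_quad (N M : Matrix (Fin n) (Fin n) ℂ) (x : Fin n → ℂ) :
    star x ⬝ᵥ (N * M * star N) *ᵥ x
      = star (star N *ᵥ x) ⬝ᵥ (M *ᵥ (star N *ᵥ x)) := by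
  rw [star_mulVec]
  rw [← mulVec_mulVec, ← mulVec_mulVec, dotProduct_mulVec]
  simp [Matrix.star_eq_conjTranspose]

variable {A : Matrix (Fin n) (Fin n) ℂ} (hA : A.IsHermitian)

lemma quad_decomp (x : Fin n → ℂ) :
    star x ⬝ᵥ A *ᵥ x = ∑ k, (hA.eigenvalues k : ℂ) *
      Complex.normSq ((star (hA.eigenvectorUnitary : Matrix (Fin n) (Fin n) ℂ) *ᵥ x) k) := by
  conv_lhs => rw [hA.spectral_theorem, Unitary.conjStarAlgAut_apply, conj_quad]
  set y := star (hA.eigenvectorUnitary : Matrix (Fin n) (Fin n) ℂ) *ᵥ x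
  simp only [dotProduct, mulVec_diagonal, Function.comp_apply]
  refine Finset.sum_congr rfl fun k _ => ?_
  rw [Complex.normSq_eq_conj_mul_self, Pi.star_apply, Complex.star_def]
  have h : (RCLike.ofReal (hA.eigenvalues k) : ℂ) = ((hA.eigenvalues k : ℝ) : ℂ) := rfl
  rw [h]; ring

lemma nsq_starU (x : Fin n → ℂ) :
    nsq (star (hA.eigenvectorUnitary : Matrix (Fin n) (Fin n) ℂ) *ᵥ x) = nsq x := by
  set U := (hA.eigenvectorUnitary : Matrix (Fin n) (Fin n) ℂ) with hU
  have h1 : U * 1 * star U = 1 := by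
    rw [mul_one]
    exact (Matrix.mem_unitaryGroup_iff).mp (hA.eigenvectorUnitary).2
  have := conj_quad U 1 x
  rw [h1] at this
  simp only [one_mulVec] at this
  have h2 : star x ⬝ᵥ x = star (star U *ᵥ x) ⬝ᵥ (star U *ᵥ x) := this
  rw [dot_self, dot_self] at h2
  exact_mod_cast h2.symm


lemma eig_le [Nonempty (Fin n)] (k : Fin n) : hA.eigenvalues k ≤ ⨆ i, hA.eigenvalues i :=
  le_ciSup (Set.Finite.bddAbove (Set.finite_range _)) k

lemma quad_le [Nonempty (Fin n)] (x : Fin n → ℂ) :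
    (star x ⬝ᵥ A *ᵥ x).re ≤ (⨆ i, hA.eigenvalues i) * nsq x := by
  have h := congrArg Complex.re (quad_decomp hA x)
  rw [h]
  set y := star (hA.eigenvectorUnitary : Matrix (Fin n) (Fin n) ℂ) *ᵥ x with hy
  have hn : nsq y = nsq x := nsq_starU hA x
  rw [← hn, nsq, Finset.mul_sum]
  rw [Complex.re_sum]
  apply Finset.sum_le_sum
  intro k _
  have : ((hA.eigenvalues k : ℂ) * (Complex.normSq (y k) : ℂ)).re
      = hA.eigenvalues k * Complex.normSq (y k) := by
    push_cast; simp [Complex.ofReal_mul]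
  rw [this]
  exact mul_le_mul_of_nonneg_right (eig_le hA k) (Complex.normSq_nonneg _)

lemma quad_eq_imp [Nonempty (Fin n)] (x : Fin n → ℂ)
    (h : (star x ⬝ᵥ A *ᵥ x).re = (⨆ i, hA.eigenvalues i) * nsq x) :
    A *ᵥ x = ((⨆ i, hA.eigenvalues i : ℝ) : ℂ) • x := by
  set U := (hA.eigenvectorUnitary : Matrix (Fin n) (Fin n) ℂ) with hU
  set y := star U *ᵥ x with hy
  set lam := (⨆ i, hA.eigenvalues i : ℝ) with hlam
  have hd := congrArg Complex.re (quad_decomp hA x)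
  have hsum : ∑ k, hA.eigenvalues k * Complex.normSq (y k) = lam * nsq y := by
    rw [nsq_starU hA x, ← h, hd, Complex.re_sum]
    refine Finset.sum_congr rfl fun k _ => ?_
    push_cast; simp [Complex.ofReal_mul, hy, hU]
  have hzero : ∑ k, (lam - hA.eigenvalues k) * Complex.normSq (y k) = 0 := by
    simp only [sub_mul, Finset.sum_sub_distrib, hsum, nsq, Finset.mul_sum]
    ring
  have hterm : ∀ k ∈ Finset.univ, (lam - hA.eigenvalues k) * Complex.normSq (y k) = 0 := by
    apply (Finset.sum_eq_zero_iff_of_nonneg ?_).mp hzero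
    intro k _
    exact mul_nonneg (sub_nonneg.mpr (eig_le hA k)) (Complex.normSq_nonneg _)
  have hDy : Matrix.diagonal (RCLike.ofReal ∘ hA.eigenvalues) *ᵥ y = (lam : ℂ) • y := by
    funext k
    rw [mulVec_diagonal]
    rcases mul_eq_zero.mp (hterm k (Finset.mem_univ k)) with h1 | h2
    · have : hA.eigenvalues k = lam := by linarith [sub_eq_zero.mp h1]
      simp [Function.comp_apply, this]
    · have : y k = 0 := by
        have := Complex.normSq_eq_zero.mp h2
        exact this
      simp [this]
  have hUU : U * star U = 1 := (Matrix.mem_unitaryGroup_iff).mp (hA.eigenvectorUnitary).2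
  calc A *ᵥ x = (U * Matrix.diagonal (RCLike.ofReal ∘ hA.eigenvalues) * star U) *ᵥ x := by
        conv_lhs => rw [hA.spectral_theorem, Unitary.conjStarAlgAut_apply]
    _ = U *ᵥ (Matrix.diagonal (RCLike.ofReal ∘ hA.eigenvalues) *ᵥ y) := by
        rw [← mulVec_mulVec, ← mulVec_mulVec]
    _ = U *ᵥ ((lam : ℂ) • y) := by rw [hDy]
    _ = (lam : ℂ) • (U *ᵥ y) := by rw [mulVec_smul]
    _ = (lam : ℂ) • x := by rw [hy, mulVec_mulVec, hUU, one_mulVec]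

lemma exists_eigvec [Nonempty (Fin n)] :
    ∃ x : Fin n → ℂ, nsq x = 1 ∧ A *ᵥ x = ((⨆ i, hA.eigenvalues i : ℝ) : ℂ) • x := by
  obtain ⟨k, hk⟩ := exists_eq_ciSup_of_finite (f := hA.eigenvalues)
  refine ⟨⇑(hA.eigenvectorBasis k), ?_, ?_⟩
  · have h1 : ‖hA.eigenvectorBasis k‖ = 1 := hA.eigenvectorBasis.orthonormal.1 k
    have h2 : (inner ℂ (hA.eigenvectorBasis k) (hA.eigenvectorBasis k) : ℂ) = 1 := by
      rw [inner_self_eq_norm_sq_to_K, h1]; norm_num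
    rw [EuclideanSpace.inner_eq_star_dotProduct] at h2
    have h3 : star ⇑(hA.eigenvectorBasis k) ⬝ᵥ ⇑(hA.eigenvectorBasis k) = 1 := by rw [dotProduct_comm]; exact h2
    rw [dot_self] at h3
    exact_mod_cast h3
  · rw [hA.mulVec_eigenvectorBasis, ← hk]
    funext i
    simp [Complex.real_smul]


lemma nsq_conj {N : Matrix (Fin n) (Fin n) ℂ} (hN : N * star N = 1) (x : Fin n → ℂ) :
    nsq (star N *ᵥ x) = nsq x := by
  have h := conj_quad N 1 x
  rw [mul_one, hN, one_mulVec, one_mulVec] at h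
  rw [dot_self, dot_self] at h
  exact_mod_cast h.symm

lemma iSup_le_of_sim [Nonempty (Fin n)] {A B N : Matrix (Fin n) (Fin n) ℂ}
    (hA : A.IsHermitian) (hB : B.IsHermitian) (hN : N * star N = 1)
    (h : A = N * B * star N) :
    (⨆ i, hA.eigenvalues i) ≤ ⨆ i, hB.eigenvalues i := by
  obtain ⟨x, hx1, hxeig⟩ := exists_eigvec hA
  have h1 : (star x ⬝ᵥ A *ᵥ x).re = ⨆ i, hA.eigenvalues i := by
    rw [hxeig, dotProduct_smul, dot_self, hx1]
    simp
  set y := star N *ᵥ x with hy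
  have h2 : star x ⬝ᵥ A *ᵥ x = star y ⬝ᵥ B *ᵥ y := by rw [h]; exact conj_quad N B x
  have h3 : nsq y = nsq x := nsq_conj hN x
  have h4 := quad_le hB y
  rw [h3, hx1, mul_one] at h4
  rw [← h1, h2]
  exact h4


lemma inv_eq_conj_of_abs_one {z : ℂ} (h : ‖z‖ = 1) :
    z⁻¹ = (starRingEnd ℂ) z := by
  rw [Complex.inv_def, Complex.normSq_eq_norm_sq, h]
  norm_num

lemma quad_expand (A : Matrix (Fin n) (Fin n) ℂ) (v : Fin n → ℂ) :
    (star v ⬝ᵥ A *ᵥ v).re = ∑ i, ∑ j, ((starRingEnd ℂ) (v i) * A i j * v j).re := by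
  rw [dotProduct, Complex.re_sum]
  refine Finset.sum_congr rfl fun i _ => ?_
  have h1 : star v i * (A *ᵥ v) i = ∑ j, (starRingEnd ℂ) (v i) * A i j * v j := by
    rw [Matrix.mulVec, dotProduct, Finset.mul_sum]
    refine Finset.sum_congr rfl fun j _ => ?_
    rw [Pi.star_apply, Complex.star_def, mul_assoc]
  rw [h1, Complex.re_sum]

end Stmt12Aux

open Stmt12Aux in
/-- For a connected complex unit gain graph, `λ₁(L(Φ)) = λ₁(Q(Γ))` holds if and
only if `Φ` is switching equivalent to `(Γ, −1)`, i.e. there is `ζ : V → T` with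
`(ζ i)⁻¹ φ(e_ij) ζ j = −1` on every edge. -/
theorem stmt_12 {n : ℕ} (hn : 0 < n)
    (G : SimpleGraph (Fin n)) [DecidableRel G.Adj] (hconn : G.Connected)
    (φ : Fin n → Fin n → ℂ)
    (hunit : ∀ i j, G.Adj i j → ‖φ i j‖ = 1)
    (hinv : ∀ i j, G.Adj i j → φ j i = (φ i j)⁻¹)
    (L Q : Matrix (Fin n) (Fin n) ℂ)
    (hLdef : L = Matrix.diagonal (fun i => (G.degree i : ℂ)) -
      Matrix.of (fun i j => if G.Adj i j then φ i j else 0))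
    (hQdef : Q = Matrix.diagonal (fun i => (G.degree i : ℂ)) + G.adjMatrix ℂ)
    (hL : L.IsHermitian) (hQ : Q.IsHermitian) :
    (⨆ i, hL.eigenvalues i) = (⨆ i, hQ.eigenvalues i) ↔
      ∃ ζ : Fin n → ℂ, (∀ i, ‖ζ i‖ = 1) ∧
        ∀ i j, G.Adj i j → (ζ i)⁻¹ * φ i j * ζ j = -1 := by
  haveI : Nonempty (Fin n) := Fin.pos_iff_nonempty.mp hn
  constructor
  · intro heq
    obtain ⟨x, hx1, hxeig⟩ := Stmt12Aux.exists_eigvec hL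
    rw [heq] at hxeig
    set lam := ⨆ i, hQ.eigenvalues i with hlam
    set w : Fin n → ℂ := fun i => ((‖x i‖ : ℝ) : ℂ) with hw
    have hwnsq : Stmt12Aux.nsq w = 1 := by
      rw [← hx1]
      refine Finset.sum_congr rfl fun i _ => ?_
      show Complex.normSq ((‖x i‖ : ℝ) : ℂ) = Complex.normSq (x i)
      rw [Complex.normSq_ofReal, Complex.normSq_eq_norm_sq, sq]
    have hS1 : (star x ⬝ᵥ L *ᵥ x).re = lam := by
      rw [hxeig, dotProduct_smul, Stmt12Aux.dot_self, hx1]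
      simp
    have hquadL : ∀ i j, ((starRingEnd ℂ) (x i) * L i j * x j).re
        = (if j = i then (G.degree i : ℝ) * Complex.normSq (x i) else 0)
          - (if G.Adj i j then ((starRingEnd ℂ) (x i) * φ i j * x j).re else 0) := by
      intro i j
      rw [hLdef, Matrix.sub_apply, Matrix.diagonal_apply, Matrix.of_apply]
      by_cases he : i = j
      · subst he
        rw [if_pos rfl, if_pos rfl, if_neg (G.irrefl), if_neg (G.irrefl), sub_zero, sub_zero]
        have h1 : (starRingEnd ℂ) (x i) * (G.degree i : ℂ) * x i
            = (((G.degree i : ℝ) * Complex.normSq (x i) : ℝ) : ℂ) := by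
          push_cast
          rw [Complex.normSq_eq_conj_mul_self]
          ring
        rw [h1, Complex.ofReal_re]
      · rw [if_neg he, if_neg (show ¬ j = i from fun h => he h.symm)]
        by_cases hij : G.Adj i j
        · rw [if_pos hij, if_pos hij]
          simp [zero_sub, mul_neg, neg_mul, Complex.neg_re]
        · rw [if_neg hij, if_neg hij]
          simp
    have hquadQ : ∀ i j, ((starRingEnd ℂ) (w i) * Q i j * w j).re
        = (if j = i then (G.degree i : ℝ) * Complex.normSq (x i) else 0)
          + (if G.Adj i j then ‖x i‖ * ‖x j‖ else 0) := by
      intro i j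
      rw [hQdef, Matrix.add_apply, Matrix.diagonal_apply, SimpleGraph.adjMatrix_apply]
      have hwc : (starRingEnd ℂ) (w i) = ((‖x i‖ : ℝ) : ℂ) := by
        rw [hw]; exact Complex.conj_ofReal _
      by_cases he : i = j
      · subst he
        rw [if_pos rfl, if_pos rfl, if_neg (G.irrefl), if_neg (G.irrefl), add_zero, add_zero]
        rw [hwc]
        show (((‖x i‖ : ℝ) : ℂ) * (G.degree i : ℂ) * ((‖x i‖ : ℝ) : ℂ)).re
          = (G.degree i : ℝ) * Complex.normSq (x i)
        have h1 : ((‖x i‖ : ℝ) : ℂ) * (G.degree i : ℂ) * ((‖x i‖ : ℝ) : ℂ)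
            = (((G.degree i : ℝ) * Complex.normSq (x i) : ℝ) : ℂ) := by
          rw [Complex.normSq_eq_norm_sq]
          push_cast
          ring
        rw [h1, Complex.ofReal_re]
      · rw [if_neg he, if_neg (show ¬ j = i from fun h => he h.symm)]
        by_cases hij : G.Adj i j
        · rw [if_pos hij, if_pos hij]
          simp only [zero_add, mul_one]
          rw [hwc]
          show (((‖x i‖ : ℝ) : ℂ) * ((‖x j‖ : ℝ) : ℂ)).re
            = ‖x i‖ * ‖x j‖
          rw [← Complex.ofReal_mul, Complex.ofReal_re]
        · rw [if_neg hij, if_neg hij]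
          simp
    have hLexp : (star x ⬝ᵥ L *ᵥ x).re
        = (∑ i, (G.degree i : ℝ) * Complex.normSq (x i))
          - ∑ i, ∑ j, (if G.Adj i j then ((starRingEnd ℂ) (x i) * φ i j * x j).re else 0) := by
      rw [Stmt12Aux.quad_expand]
      rw [← Finset.sum_sub_distrib]
      refine Finset.sum_congr rfl fun i _ => ?_
      rw [Finset.sum_congr rfl fun j _ => hquadL i j, Finset.sum_sub_distrib]
      congr 1
      rw [Finset.sum_ite_eq' Finset.univ i fun _ => (G.degree i : ℝ) * Complex.normSq (x i)]
      simp
    have hQexp : (star w ⬝ᵥ Q *ᵥ w).re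
        = (∑ i, (G.degree i : ℝ) * Complex.normSq (x i))
          + ∑ i, ∑ j, (if G.Adj i j then ‖x i‖ * ‖x j‖ else 0) := by
      rw [Stmt12Aux.quad_expand]
      rw [← Finset.sum_add_distrib]
      refine Finset.sum_congr rfl fun i _ => ?_
      rw [Finset.sum_congr rfl fun j _ => hquadQ i j, Finset.sum_add_distrib]
      congr 1
      rw [Finset.sum_ite_eq' Finset.univ i fun _ => (G.degree i : ℝ) * Complex.normSq (x i)]
      simp
    set T1 := ∑ i, ∑ j, (if G.Adj i j then ((starRingEnd ℂ) (x i) * φ i j * x j).re else 0)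
      with hT1
    set T2 := ∑ i, ∑ j, (if G.Adj i j then ‖x i‖ * ‖x j‖ else 0) with hT2
    have habsz : ∀ i j, G.Adj i j →
        ‖(starRingEnd ℂ) (x i) * φ i j * x j‖
          = ‖x i‖ * ‖x j‖ := by
      intro i j hij
      rw [norm_mul, norm_mul, Complex.norm_conj, hunit i j hij, mul_one]
    set U := ∑ i, ∑ j, (if G.Adj i j then
        ((starRingEnd ℂ) (x i) * φ i j * x j).re + ‖x i‖ * ‖x j‖
      else 0) with hU
    have hUsum : T1 + T2 = U := by
      rw [hT1, hT2, hU, ← Finset.sum_add_distrib]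
      refine Finset.sum_congr rfl fun i _ => ?_
      rw [← Finset.sum_add_distrib]
      refine Finset.sum_congr rfl fun j _ => ?_
      split_ifs <;> simp
    have hUterm : ∀ i j, 0 ≤ (if G.Adj i j then
        ((starRingEnd ℂ) (x i) * φ i j * x j).re + ‖x i‖ * ‖x j‖
      else 0) := by
      intro i j
      split_ifs with hij
      · have h1 := Complex.abs_re_le_norm ((starRingEnd ℂ) (x i) * φ i j * x j)
        rw [habsz i j hij] at h1
        have h2 := abs_le.mp h1
        linarith [h2.1]
      · exact le_refl 0
    have hUnonneg : 0 ≤ U :=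
      Finset.sum_nonneg fun i _ => Finset.sum_nonneg fun j _ => hUterm i j
    have h23 : (star w ⬝ᵥ Q *ᵥ w).re ≤ lam := by
      have := Stmt12Aux.quad_le hQ w
      rwa [hwnsq, mul_one] at this
    have h12 : (star x ⬝ᵥ L *ᵥ x).re ≤ (star w ⬝ᵥ Q *ᵥ w).re := by
      rw [hLexp, hQexp]
      linarith
    have hS2 : (star w ⬝ᵥ Q *ᵥ w).re = lam :=
      le_antisymm h23 (by rw [← hS1]; exact h12)
    have hQw : Q *ᵥ w = (lam : ℂ) • w :=
      Stmt12Aux.quad_eq_imp hQ w (by rw [hS2, hwnsq, mul_one])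
    have hU0 : U = 0 := by
      have h5 : (star x ⬝ᵥ L *ᵥ x).re = (star w ⬝ᵥ Q *ᵥ w).re := by rw [hS1, hS2]
      rw [hLexp, hQexp] at h5
      linarith
    have hterm0 : ∀ i j, G.Adj i j →
        ((starRingEnd ℂ) (x i) * φ i j * x j).re
          = -(‖x i‖ * ‖x j‖) := by
      intro i j hij
      have h7 : ∀ i ∈ Finset.univ, (∑ j, (if G.Adj i j then
          ((starRingEnd ℂ) (x i) * φ i j * x j).re + ‖x i‖ * ‖x j‖
        else 0)) = 0 := by
        apply (Finset.sum_eq_zero_iff_of_nonneg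
          (fun i _ => Finset.sum_nonneg fun j _ => hUterm i j)).mp
        rw [← hU, hU0]
      have h8 := (Finset.sum_eq_zero_iff_of_nonneg
        (fun j _ => hUterm i j)).mp (h7 i (Finset.mem_univ i)) j (Finset.mem_univ j)
      rw [if_pos hij] at h8
      linarith [h8]
    have hE : ∀ i j, G.Adj i j →
        (starRingEnd ℂ) (x i) * φ i j * x j
          = -((‖x i‖ * ‖x j‖ : ℝ) : ℂ) := by
      intro i j hij
      set z := (starRingEnd ℂ) (x i) * φ i j * x j with hz
      have hre := hterm0 i j hij
      have habs := habsz i j hij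
      have him : z.im = 0 := by
        have h9 := Complex.sq_norm z
        rw [habs] at h9
        have hnormsq : Complex.normSq z = z.re ^ 2 + z.im ^ 2 := by
          rw [Complex.normSq_apply]; ring
        rw [hnormsq] at h9
        have hre2 : z.re ^ 2 = (‖x i‖ * ‖x j‖) ^ 2 := by
          rw [hre]; ring
        have : z.im ^ 2 = 0 := by linarith
        exact pow_eq_zero_iff (n := 2) (by norm_num) |>.mp this
      apply Complex.ext
      · rw [hre]
        simp
      · rw [him]
        simp
    have hspread : ∀ i j, G.Adj i j → x i = 0 → x j = 0 := by
      intro i j hij hxi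
      have h10 := congrFun hQw i
      rw [hQdef, Matrix.add_mulVec, Pi.add_apply, Matrix.mulVec_diagonal,
        SimpleGraph.adjMatrix_mulVec_apply] at h10
      have hwi : w i = 0 := by rw [hw]; simp [hxi]
      rw [hwi, mul_zero, Pi.smul_apply, hwi, smul_zero, zero_add] at h10
      have h11 : ∑ k ∈ G.neighborFinset i, ‖x k‖ = 0 := by
        have := congrArg Complex.re h10
        simp only [Complex.re_sum, Complex.zero_re] at this
        rw [← this]
        refine Finset.sum_congr rfl fun k _ => ?_
        rw [hw]
        simp
      have h12' := (Finset.sum_eq_zero_iff_of_nonneg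
        (fun k _ => norm_nonneg (x k))).mp h11 j (by
          rw [SimpleGraph.mem_neighborFinset]; exact hij)
      exact norm_eq_zero.mp h12'
    have hnz : ∀ i, x i ≠ 0 := by
      by_contra hcon
      push_neg at hcon
      obtain ⟨i0, hi0⟩ := hcon
      have hall : ∀ (u v : Fin n) (p : G.Walk u v), x u = 0 → x v = 0 := by
        intro u v p
        induction p with
        | nil => exact id
        | cons h q ih => exact fun h0 => ih (hspread _ _ h h0)
      have hzero : ∀ j, x j = 0 := by
        intro j
        obtain ⟨p⟩ := hconn.preconnected i0 j
        exact hall i0 j p hi0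
      have : Stmt12Aux.nsq x = 0 := by
        rw [Stmt12Aux.nsq]
        refine Finset.sum_eq_zero fun i _ => ?_
        rw [hzero i]
        simp
      rw [hx1] at this
      norm_num at this
    refine ⟨fun i => x i / ((‖x i‖ : ℝ) : ℂ), fun i => ?_, fun i j hij => ?_⟩
    · have hai : ‖x i‖ ≠ 0 := norm_ne_zero_iff.mpr (hnz i)
      rw [norm_div, Complex.norm_of_nonneg (norm_nonneg _),
        div_self hai]
    · have hai : ‖x i‖ ≠ 0 := norm_ne_zero_iff.mpr (hnz i)
      have haj : ‖x j‖ ≠ 0 := norm_ne_zero_iff.mpr (hnz j)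
      have hai' : ((‖x i‖ : ℝ) : ℂ) ≠ 0 := by exact_mod_cast hai
      have haj' : ((‖x j‖ : ℝ) : ℂ) ≠ 0 := by exact_mod_cast haj
      have habs1 : ‖x i / ((‖x i‖ : ℝ) : ℂ)‖ = 1 := by
        rw [norm_div, Complex.norm_of_nonneg (norm_nonneg _),
          div_self hai]
      have hinvζ : (x i / ((‖x i‖ : ℝ) : ℂ))⁻¹
          = (starRingEnd ℂ) (x i / ((‖x i‖ : ℝ) : ℂ)) :=
        Stmt12Aux.inv_eq_conj_of_abs_one habs1
      rw [hinvζ, map_div₀, Complex.conj_ofReal]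
      have hcalc : (starRingEnd ℂ) (x i) / ((‖x i‖ : ℝ) : ℂ) * φ i j
          * (x j / ((‖x j‖ : ℝ) : ℂ))
          = ((starRingEnd ℂ) (x i) * φ i j * x j)
            / (((‖x i‖ : ℝ) : ℂ) * ((‖x j‖ : ℝ) : ℂ)) := by
        ring
      rw [hcalc, hE i j hij]
      rw [Complex.ofReal_mul, neg_div, div_self (mul_ne_zero hai' haj')]
  · rintro ⟨ζ, hζ1, hζ2⟩
    have hζne : ∀ i, ζ i ≠ 0 := by
      intro i h
      have := hζ1 i
      rw [h] at this
      simp at this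
    have hone : ∀ i, (starRingEnd ℂ) (ζ i) * ζ i = 1 := by
      intro i
      rw [← Complex.normSq_eq_conj_mul_self, Complex.normSq_eq_norm_sq, hζ1 i]
      norm_num
    have hζconj : ∀ i, (starRingEnd ℂ) (ζ i) = (ζ i)⁻¹ := by
      intro i
      field_simp [hζne i]
      exact hone i
    set D := Matrix.diagonal ζ with hD
    have hDstar : star D = Matrix.diagonal (star ζ) := by
      rw [hD, Matrix.star_eq_conjTranspose, Matrix.diagonal_conjTranspose]
    have hDD : D * star D = 1 := by
      rw [hDstar, hD, Matrix.diagonal_mul_diagonal]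
      have : (fun i => ζ i * star ζ i) = fun _ => (1 : ℂ) := funext fun i => by
        rw [Pi.star_apply, Complex.star_def, mul_comm]; exact hone i
      rw [this]
      exact Matrix.diagonal_one
    have hDD' : star D * D = 1 := by
      rw [hDstar, hD, Matrix.diagonal_mul_diagonal]
      have : (fun i => star ζ i * ζ i) = fun _ => (1 : ℂ) := funext fun i => by
        rw [Pi.star_apply, Complex.star_def]; exact hone i
      rw [this]
      exact Matrix.diagonal_one
    have hsim : L = D * Q * star D := by
      ext i j
      rw [hDstar, Matrix.mul_diagonal, hD, Matrix.diagonal_mul, hLdef, hQdef]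
      rw [Matrix.sub_apply, Matrix.add_apply, Matrix.of_apply, SimpleGraph.adjMatrix_apply]
      by_cases hij : G.Adj i j
      · have hne : i ≠ j := G.ne_of_adj hij
        rw [Matrix.diagonal_apply_ne _ hne, if_pos hij, if_pos hij]
        have h2 := hζ2 i j hij
        have h2' : φ i j * ζ j = -ζ i := by
          have h4 := congrArg (ζ i * ·) h2
          simpa [← mul_assoc, mul_inv_cancel₀ (hζne i)] using h4
        have hφ : φ i j = -(ζ i * (ζ j)⁻¹) := by
          field_simp [hζne j]
          linear_combination h2'
        rw [hφ, Pi.star_apply, Complex.star_def, hζconj j]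
        ring
      · by_cases he : i = j
        · subst he
          rw [Matrix.diagonal_apply_eq, if_neg hij, if_neg hij]
          rw [Pi.star_apply, Complex.star_def, add_zero, sub_zero, mul_comm, ← mul_assoc,
            hone i, one_mul]
        · rw [Matrix.diagonal_apply_ne _ he, if_neg hij, if_neg hij]
          simp
    have hsim' : Q = star D * L * star (star D) := by
      rw [star_star, hsim]
      calc Q = 1 * Q * 1 := by rw [one_mul, mul_one]
        _ = (star D * D) * Q * (star D * D) := by rw [hDD']
        _ = star D * (D * Q * star D) * D := by simp only [mul_assoc]
    exact le_antisymm
      (Stmt12Aux.iSup_le_of_sim hL hQ hDD hsim)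
      (Stmt12Aux.iSup_le_of_sim hQ hL (by rw [star_star]; exact hDD') hsim')
end
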